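/- Let c : ℤ → ℤ be finitely supported with Σ_{i ≡ 1 (mod 3)} c_i - Σ_{i ≡ 2 (mod 3)} c_i = 0. Let m ≥ 1 and n ≥ 0 be integers with 3^n ∣ (2m+1). Then S_{2m+1} = Σ_i c_i · i^{2m+1} satisfies S_{2m+1} ≡ 0 (mod 3^{n+1}). -/

import Mathlib

private lemma pow_three_pow_mod (n : ℕ) (x : ℤ) (hx : x % 3 = 1) :
    x ^ 3 ^ n ≡ 1 [ZMOD 3 ^ (n + 1)] := by
  induction n with
  | zero =>
    simpa [Int.ModEq] using hx
  | succ n ih =>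
    set y : ℤ := x ^ 3 ^ n with hy
    have hy3 : y % 3 = 1 := by
      have hx1 : x ≡ 1 [ZMOD 3] := by simpa [Int.ModEq] using hx
      have := hx1.pow (3 ^ n)
      simpa [Int.ModEq] using this
    have hdvd : (3 : ℤ) ^ (n + 1) ∣ y - 1 := Int.ModEq.dvd ih.symm
    obtain ⟨t, ht⟩ : ∃ t, y = 3 * t + 1 := ⟨y / 3, by omega⟩
    have h3 : (3 : ℤ) ∣ y ^ 2 + y + 1 := ⟨3 * t ^ 2 + 3 * t + 1, by rw [ht]; ring⟩
    have key : (3 : ℤ) ^ (n + 2) ∣ y ^ 3 - 1 := by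
      have heq : y ^ 3 - 1 = (y - 1) * (y ^ 2 + y + 1) := by ring
      rw [heq, pow_succ]
      exact mul_dvd_mul hdvd h3
    have hpow : x ^ 3 ^ (n + 1) = y ^ 3 := by
      rw [hy, ← pow_mul, pow_succ]
    rw [hpow]
    have : y ^ 3 ≡ 1 [ZMOD 3 ^ (n + 2)] := (Int.modEq_iff_dvd.mpr (by simpa using key)).symm
    simpa using this

private lemma pow_three_pow_mod_neg (n : ℕ) (x : ℤ) (hx : x % 3 = 2) :
    x ^ 3 ^ n ≡ -1 [ZMOD 3 ^ (n + 1)] := by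
  have h : (-x) % 3 = 1 := by omega
  have := pow_three_pow_mod n (-x) h
  have hodd : Odd ((3:ℕ) ^ n) := Odd.pow ⟨1, by norm_num⟩
  rw [hodd.neg_pow] at this
  have := this.neg
  simpa using this

private lemma key_pow (m n : ℕ) (hdvd : 3 ^ n ∣ 2 * m + 1) (i : ℤ) :
    i ^ (2 * m + 1) ≡
      (if i % 3 = 1 then 1 else if i % 3 = 2 then -1 else 0) [ZMOD 3 ^ (n + 1)] := by
  obtain ⟨k, hk⟩ := hdvd
  have hkodd : Odd k := by
    rcases Nat.even_or_odd k with he | ho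
    · exfalso
      obtain ⟨r, hr⟩ : Even (2 * m + 1) := hk ▸ he.mul_left _
      omega
    · exact ho
  have hsplit : i ^ (2 * m + 1) = (i ^ 3 ^ n) ^ k := by
    rw [← pow_mul, ← hk]
  rcases (show i % 3 = 0 ∨ i % 3 = 1 ∨ i % 3 = 2 by omega) with h | h | h
  · have h0 : (if i % 3 = 1 then (1:ℤ) else if i % 3 = 2 then -1 else 0) = 0 := by
      simp [h]
    rw [h0]
    have h3i : (3 : ℤ) ∣ i := by omega
    have hle : n + 1 ≤ 2 * m + 1 := by
      have h1 : 3 ^ n ≤ 2 * m + 1 := Nat.le_of_dvd (by omega) ⟨k, hk⟩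
      have h2 : n < 3 ^ n := Nat.lt_pow_self (by norm_num : 1 < 3)
      omega
    have hd : (3 : ℤ) ^ (n + 1) ∣ i ^ (2 * m + 1) :=
      (pow_dvd_pow (3:ℤ) hle).trans (pow_dvd_pow_of_dvd h3i _)
    exact Int.modEq_zero_iff_dvd.mpr hd
  · rw [if_pos h, hsplit]
    have := (pow_three_pow_mod n i h).pow k
    simpa using this
  · rw [if_neg (by omega), if_pos h, hsplit]
    have := (pow_three_pow_mod_neg n i h).pow k
    rwa [hkodd.neg_one_pow] at this

theorem odd_power_sum_mod_three_pow (c : ℤ →₀ ℤ)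
    (h3 : ∑ i ∈ c.support.filter (fun i => i % 3 = 1), c i
        - ∑ i ∈ c.support.filter (fun i => i % 3 = 2), c i = 0)
    (m n : ℕ) (hm : 1 ≤ m) (hdvd : 3 ^ n ∣ 2 * m + 1) :
    (∑ i ∈ c.support, c i * i ^ (2 * m + 1)) ≡ 0 [ZMOD (3 ^ (n + 1))] := by
  have step1 : (∑ i ∈ c.support, c i * i ^ (2 * m + 1)) ≡
      (∑ i ∈ c.support, c i *
        (if i % 3 = 1 then (1:ℤ) else if i % 3 = 2 then -1 else 0)) [ZMOD 3 ^ (n + 1)] := by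
    rw [Int.modEq_iff_dvd, ← Finset.sum_sub_distrib]
    apply Finset.dvd_sum
    intro i _
    have hd := (key_pow m n hdvd i).dvd
    have heq : c i * (if i % 3 = 1 then (1:ℤ) else if i % 3 = 2 then -1 else 0)
        - c i * i ^ (2 * m + 1)
        = c i * ((if i % 3 = 1 then (1:ℤ) else if i % 3 = 2 then -1 else 0)
            - i ^ (2 * m + 1)) := by ring
    rw [heq]
    exact Dvd.dvd.mul_left hd _
  have step2 : (∑ i ∈ c.support, c i *
        (if i % 3 = 1 then (1:ℤ) else if i % 3 = 2 then -1 else 0)) = 0 := by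
    have hcongr : ∀ i ∈ c.support, c i *
        (if i % 3 = 1 then (1:ℤ) else if i % 3 = 2 then -1 else 0)
        = (if i % 3 = 1 then c i else 0) - (if i % 3 = 2 then c i else 0) := by
      intro i _
      rcases (show i % 3 = 0 ∨ i % 3 = 1 ∨ i % 3 = 2 by omega) with h | h | h <;>
        simp [h]
    rw [Finset.sum_congr rfl hcongr, Finset.sum_sub_distrib,
      ← Finset.sum_filter, ← Finset.sum_filter]
    exact h3
  calc (∑ i ∈ c.support, c i * i ^ (2 * m + 1)) ≡ _ [ZMOD 3 ^ (n + 1)] := step1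
    _ = 0 := step2
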